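/- Let α : V × V → W be symmetric with curvature nullity Γ and relative nullity Δ_α, β = α|_{V × Γ}. Suppose dim S(β) = dim Γ − dim Δ_α. Then Δ_β + Γ = V and S(β) = S(α|_{Γ × Γ}), i.e., the span of α restricted to Γ × Γ already equals the span of β. -/

import Mathlib

open Module LinearMap RealInnerProductSpace

section AuxPencil
open Polynomial
variable {W : Type*} [NormedAddCommGroup W] [InnerProductSpace ℝ W] [FiniteDimensional ℝ W]

lemma indep_perturb {r : ℕ} (a bb : Fin (r+1) → W) (h0 : LinearIndependent ℝ a) :
    ∃ t : ℝ, t ≠ 0 ∧ LinearIndependent ℝ (fun j => a j + t • bb j) := by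
  classical
  let K : Submodule ℝ W := Submodule.span ℝ (Set.range a)
  let bS : Basis (Fin (r+1)) ℝ K := Basis.span h0
  let φ : Fin (r+1) → (W →ₗ[ℝ] ℝ) := fun i =>
    (bS.coord i).comp (K.orthogonalProjectionOnto).toLinearMap
  have hφ : ∀ i j, φ i (a j) = if j = i then 1 else 0 := by
    intro i j
    have haj : a j ∈ K := Submodule.subset_span (Set.mem_range_self j)
    have hproj : K.orthogonalProjectionOnto (a j) = ⟨a j, haj⟩ := by
      have := Submodule.orthogonalProjectionOnto_mem_subspace_eq_self (K := K) ⟨a j, haj⟩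
      simpa using this
    have hbSj : bS j = ⟨a j, haj⟩ := Basis.span_apply h0 j
    simp only [φ, LinearMap.comp_apply, ContinuousLinearMap.coe_coe, hproj, ← hbSj,
      Basis.coord_apply, Basis.repr_self]
    simp [Finsupp.single_apply]
  let M : Matrix (Fin (r+1)) (Fin (r+1)) (Polynomial ℝ) :=
    Matrix.of fun i j => C (φ i (a j)) + X * C (φ i (bb j))
  let p : Polynomial ℝ := M.det
  have hev : ∀ t : ℝ, p.eval t =
      (Matrix.of fun i j => φ i (a j + t • bb j)).det := by
    intro t
    have h1 := RingHom.map_det (evalRingHom t) M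
    have h2 : (evalRingHom t).mapMatrix M = Matrix.of fun i j => φ i (a j + t • bb j) := by
      apply Matrix.ext; intro i j
      show (evalRingHom t) (C (φ i (a j)) + X * C (φ i (bb j))) = φ i (a j + t • bb j)
      simp only [map_add, map_mul, eval_C, eval_X, coe_evalRingHom, map_smul, smul_eq_mul]
    simp only [p]
    rw [show (Polynomial.eval t p) = (evalRingHom t) M.det from rfl, h1, h2]
  have hp0 : p.eval 0 = 1 := by
    rw [hev 0]
    have : (Matrix.of fun i j => φ i (a j + (0:ℝ) • bb j)) = (1 : Matrix _ _ ℝ) := by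
      ext i j
      simp [hφ, Matrix.one_apply, eq_comm]
    rw [this, Matrix.det_one]
  have hpne : p ≠ 0 := fun h => by simp [h] at hp0
  have hfin : {t : ℝ | p.IsRoot t}.Finite := Polynomial.finite_setOf_isRoot hpne
  obtain ⟨t, ht⟩ := ((hfin.union (Set.finite_singleton 0)).infinite_compl).nonempty
  simp only [Set.mem_compl_iff, Set.mem_union, Set.mem_setOf_eq, Set.mem_singleton_iff,
    not_or] at ht
  refine ⟨t, ht.2, ?_⟩
  have hdet : (Matrix.of fun i j => φ i (a j + t • bb j)).det ≠ 0 := by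
    rw [← hev]; exact ht.1
  rw [Fintype.linearIndependent_iff]
  intro c hc i
  have hmv : (Matrix.of fun i j => φ i (a j + t • bb j)).mulVec c = 0 := by
    funext k
    have := congrArg (φ k) hc
    simp only [map_sum, map_smul, map_zero] at this
    simpa [Matrix.mulVec, dotProduct, mul_comm, smul_eq_mul] using this
  have := Matrix.eq_zero_of_mulVec_eq_zero hdet hmv
  exact congrFun this i

lemma pencil_lemma {V : Type*} [AddCommGroup V] [Module ℝ V] [FiniteDimensional ℝ V]
    (A B : V →ₗ[ℝ] W)
    (h : ∀ t : ℝ, finrank ℝ (range (A + t • B)) ≤ finrank ℝ (range A))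
    {x : V} (hx : A x = 0) : B x ∈ range A := by
  by_contra hBx
  set r := finrank ℝ (range A) with hr
  let bR : Basis (Fin r) ℝ (range A) := finBasis ℝ (range A)
  have hmem : ∀ i, (bR i : W) ∈ range A := fun i => (bR i).2
  choose u hu using fun i => LinearMap.mem_range.mp (hmem i)
  set v : Fin r → W := fun i => (bR i : W) with hv
  have hvli : LinearIndependent ℝ v := by
    have := bR.linearIndependent
    exact this.map' (range A).subtype (Submodule.ker_subtype _)
  have hvspan : Submodule.span ℝ (Set.range v) = range A := by
    have : Set.range v = (range A).subtype '' (Set.range bR) := by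
      ext w; simp [hv, Set.range_comp]
    rw [this, ← Submodule.map_span, bR.span_eq, Submodule.map_top, Submodule.range_subtype]
  set a : Fin (r+1) → W := Fin.cons (B x) v with ha
  set bb : Fin (r+1) → W := Fin.cons 0 (fun i => B (u i)) with hbb
  have h0 : LinearIndependent ℝ a := by
    rw [ha, linearIndependent_fin_cons]
    exact ⟨hvli, by rw [hvspan]; exact hBx⟩
  obtain ⟨t, htne, hF⟩ := indep_perturb a bb h0
  set F : Fin (r+1) → W := fun j => a j + t • bb j with hFdef
  have hrange : ∀ j, F j ∈ range (A + t • B) := by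
    intro j
    refine Fin.cases ?_ ?_ j
    · have : F 0 = B x := by simp [hFdef, ha, hbb]
      rw [this]
      have hAx : (A + t • B) x = t • B x := by
        simp [LinearMap.add_apply, hx]
      refine ⟨t⁻¹ • x, ?_⟩
      rw [map_smul, hAx, smul_smul, inv_mul_cancel₀ htne, one_smul]
    · intro i
      have : F i.succ = (A + t • B) (u i) := by
        simp [hFdef, ha, hbb, hv, ← hu i, LinearMap.add_apply]
      rw [this]
      exact ⟨u i, rfl⟩
  have hle : Submodule.span ℝ (Set.range F) ≤ range (A + t • B) := by
    rw [Submodule.span_le]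
    rintro w ⟨j, rfl⟩
    exact hrange j
  have h1 : finrank ℝ (Submodule.span ℝ (Set.range F)) = r + 1 := by
    rw [finrank_span_eq_card hF, Fintype.card_fin]
  have h2 : finrank ℝ (Submodule.span ℝ (Set.range F)) ≤ finrank ℝ (range (A + t • B)) :=
    Submodule.finrank_mono hle
  have := h t
  omega
end AuxPencil

/-- If `dim S(β) = μ - ν`, then `Δ_β + Γ = V` and `S(β) = S(α|_{Γ × Γ})`. -/
theorem minimal_span_structure
    {V W : Type*} [AddCommGroup V] [Module ℝ V] [FiniteDimensional ℝ V]
    [NormedAddCommGroup W] [InnerProductSpace ℝ W] [FiniteDimensional ℝ W]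
    (α : V →ₗ[ℝ] V →ₗ[ℝ] W)
    (hsymm : ∀ X Y : V, α X Y = α Y X)
    (Γ : Submodule ℝ V)
    (hΓ : ∀ X : V, X ∈ Γ ↔
      ∀ Y Z T : V, ⟪α X T, α Y Z⟫ - ⟪α X Z, α Y T⟫ = 0)
    (Δβ : Submodule ℝ V)
    (hΔβ : ∀ X : V, X ∈ Δβ ↔ ∀ Z ∈ Γ, α X Z = 0)
    (hdim : finrank ℝ (Submodule.span ℝ {w : W | ∃ X : V, ∃ Z ∈ Γ, w = α X Z}) =
      finrank ℝ Γ - finrank ℝ (ker α)) :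
    Δβ ⊔ Γ = ⊤ ∧
      Submodule.span ℝ {w : W | ∃ X : V, ∃ Z ∈ Γ, w = α X Z} =
        Submodule.span ℝ {w : W | ∃ X ∈ Γ, ∃ Z ∈ Γ, w = α X Z} := by
  classical
  set S := Submodule.span ℝ {w : W | ∃ X : V, ∃ Z ∈ Γ, w = α X Z} with hS
  -- flatness of α on Γ-slots
  have flat : ∀ (X Y Z T : V), Z ∈ Γ → T ∈ Γ →
      ⟪α X Z, α Y T⟫ = ⟪α X T, α Y Z⟫ := by
    intro X Y Z T hZ hT
    have hZ' := (hΓ Z).mp hZ Y T X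
    have hT' := (hΓ T).mp hT Y X Z
    rw [hsymm X Z, hsymm X T]
    rw [sub_eq_zero] at hZ' hT'
    rw [hZ', hsymm Z T, hT']
  -- ker α ≤ Γ
  have hkerΓ : ker α ≤ Γ := by
    intro X hX
    rw [LinearMap.mem_ker] at hX
    rw [hΓ]
    intro Y Z T
    simp [hX]
  -- Δβ ⊓ Γ = ker α
  have hinf : Δβ ⊓ Γ = ker α := by
    apply le_antisymm
    · rintro Z ⟨hZd, hZg⟩
      rw [LinearMap.mem_ker]
      apply LinearMap.ext
      intro X
      have h1 := (hΓ Z).mp hZg X Z X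
      rw [sub_eq_zero] at h1
      have hZZ : α Z Z = 0 := (hΔβ Z).mp hZd Z hZg
      have : ⟪α Z X, α Z X⟫ = 0 := by
        nth_rewrite 2 [hsymm Z X]
        rw [h1, hZZ, inner_zero_left]
      simpa using inner_self_eq_zero.mp this
    · intro X hX
      have hX' : α X = 0 := LinearMap.mem_ker.mp hX
      exact ⟨(hΔβ X).mpr (fun Z _ => by simp [hX']), hkerΓ hX⟩
  -- choose a right regular element Z₀
  have hne : ({n : ℕ | ∃ Z ∈ Γ, n = finrank ℝ (range (α.flip Z))}).Nonempty :=
    ⟨finrank ℝ (range (α.flip 0)), 0, Γ.zero_mem, rfl⟩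
  have hbdd : BddAbove {n : ℕ | ∃ Z ∈ Γ, n = finrank ℝ (range (α.flip Z))} := by
    refine ⟨finrank ℝ W, ?_⟩
    rintro n ⟨Z, hZ, rfl⟩
    exact Submodule.finrank_le _
  obtain ⟨Z₀, hZ₀Γ, hgZ₀⟩ := Nat.sSup_mem hne hbdd
  have hmax : ∀ Z ∈ Γ, finrank ℝ (range (α.flip Z)) ≤ finrank ℝ (range (α.flip Z₀)) := by
    intro Z hZ
    rw [← hgZ₀]
    exact le_csSup hbdd ⟨Z, hZ, rfl⟩
  -- Moore's lemma
  have moore : ∀ X : V, α X Z₀ = 0 → X ∈ Δβ := by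
    intro X hX
    rw [hΔβ]
    intro Z hZ
    have hmem : α X Z ∈ range (α.flip Z₀) := by
      have := pencil_lemma (α.flip Z₀) (α.flip Z) (fun t => by
        have heq : α.flip Z₀ + t • α.flip Z = α.flip (Z₀ + t • Z) := by
          rw [map_add, map_smul]
        rw [heq]
        exact hmax _ (Γ.add_mem hZ₀Γ (Γ.smul_mem t hZ))) (x := X) hX
      simpa using this
    obtain ⟨Y, hY⟩ := hmem
    rw [LinearMap.flip_apply] at hY
    have : ⟪α X Z, α X Z⟫ = 0 := by
      nth_rewrite 2 [← hY]
      rw [flat X Y Z Z₀ hZ hZ₀Γ, hX, inner_zero_left]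
    exact inner_self_eq_zero.mp this
  -- dimension count
  have hker_le : ker (α.flip Z₀) ≤ Δβ := fun X hX => moore X (LinearMap.mem_ker.mp hX)
  have hrange_le : range (α.flip Z₀) ≤ S := by
    rintro w ⟨X, rfl⟩
    exact Submodule.subset_span ⟨X, Z₀, hZ₀Γ, rfl⟩
  have e1 := LinearMap.finrank_range_add_finrank_ker (α.flip Z₀)
  have e2 := Submodule.finrank_sup_add_finrank_inf_eq Δβ Γ
  rw [hinf] at e2
  have e3 : finrank ℝ (ker α) ≤ finrank ℝ Γ := Submodule.finrank_mono hkerΓ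
  have e4 : finrank ℝ ↥(Δβ ⊔ Γ) ≤ finrank ℝ V := Submodule.finrank_le _
  have e5 : finrank ℝ (ker (α.flip Z₀)) ≤ finrank ℝ Δβ := Submodule.finrank_mono hker_le
  have e6 : finrank ℝ (range (α.flip Z₀)) ≤ finrank ℝ S := Submodule.finrank_mono hrange_le
  rw [hdim] at e6
  have htop : Δβ ⊔ Γ = ⊤ := Submodule.eq_top_of_finrank_eq (by omega)
  refine ⟨htop, le_antisymm ?_ (Submodule.span_mono ?_)⟩
  · rw [Submodule.span_le]
    rintro w ⟨X, Z, hZ, rfl⟩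
    have hXmem : X ∈ Δβ ⊔ Γ := htop ▸ Submodule.mem_top
    obtain ⟨d, hd, g, hg, rfl⟩ := Submodule.mem_sup.mp hXmem
    have hdg : α (d + g) Z = α g Z := by
      rw [map_add, LinearMap.add_apply, (hΔβ d).mp hd Z hZ, zero_add]
    rw [hdg]
    exact Submodule.subset_span ⟨g, hg, Z, hZ, rfl⟩
  · rintro w ⟨X, hX, Z, hZ, rfl⟩
    exact ⟨X, Z, hZ, rfl⟩
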